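/- Let J and D be symmetric matrices with zero diagonal defining Ising models with free energies log Z and log Z_D, and let W = J - D. Then |log Z - log Z_D| ≤ ‖W‖_{∞→1}, where ‖W‖_{∞→1} = sup_{‖x‖_∞ ≤ 1} ‖Wx‖_1. -/
import Mathlib

open Finset

def spin (b : Bool) : ℝ := if b then 1 else -1

noncomputable def isingEnergy {n : ℕ} (J : Matrix (Fin n) (Fin n) ℝ) (x : Fin n → Bool) : ℝ :=
  ∑ i, ∑ j, J i j * spin (x i) * spin (x j)

noncomputable def partitionFn {n : ℕ} (J : Matrix (Fin n) (Fin n) ℝ) : ℝ :=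
  ∑ x : Fin n → Bool, Real.exp (isingEnergy J x)

/-- ‖W‖_{∞→1} : sup over x ∈ [-1,1]^n of ∑ i |∑ j W i j * x j|. -/
noncomputable def normInftyOne {n : ℕ} (W : Matrix (Fin n) (Fin n) ℝ) : ℝ :=
  ⨆ x : {x : Fin n → ℝ // ∀ i, |x i| ≤ 1}, ∑ i, |∑ j, W i j * x.1 j|

lemma spin_abs (b : Bool) : |spin b| = 1 := by
  cases b <;> simp [spin]

lemma normInftyOne_bdd {n : ℕ} (W : Matrix (Fin n) (Fin n) ℝ) :
    BddAbove (Set.range fun x : {x : Fin n → ℝ // ∀ i, |x i| ≤ 1} =>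
      ∑ i, |∑ j, W i j * x.1 j|) := by
  refine ⟨∑ i, ∑ j, |W i j|, ?_⟩
  rintro _ ⟨x, rfl⟩
  refine Finset.sum_le_sum fun i _ => ?_
  calc |∑ j, W i j * x.1 j| ≤ ∑ j, |W i j * x.1 j| := Finset.abs_sum_le_sum_abs _ _
    _ ≤ ∑ j, |W i j| := by
        refine Finset.sum_le_sum fun j _ => ?_
        rw [abs_mul]
        nlinarith [abs_nonneg (W i j), x.2 j, abs_nonneg (x.1 j)]

lemma energy_diff_le {n : ℕ} (J D : Matrix (Fin n) (Fin n) ℝ) (x : Fin n → Bool) :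
    |isingEnergy J x - isingEnergy D x| ≤ normInftyOne (J - D) := by
  have h1 : isingEnergy J x - isingEnergy D x
      = ∑ i, spin (x i) * ∑ j, (J - D) i j * spin (x j) := by
    simp only [isingEnergy, Matrix.sub_apply, Finset.mul_sum, ← Finset.sum_sub_distrib]
    congr 1; ext i; congr 1; ext j; ring
  rw [h1]
  have h2 : |∑ i, spin (x i) * ∑ j, (J - D) i j * spin (x j)|
      ≤ ∑ i, |∑ j, (J - D) i j * spin (x j)| := by
    calc _ ≤ ∑ i, |spin (x i) * ∑ j, (J - D) i j * spin (x j)| :=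
          Finset.abs_sum_le_sum_abs _ _
      _ = _ := by
          refine Finset.sum_congr rfl fun i _ => ?_
          rw [abs_mul, spin_abs, one_mul]
  refine h2.trans ?_
  have := le_ciSup (normInftyOne_bdd (J - D)) ⟨fun i => spin (x i), fun i => (spin_abs (x i)).le⟩
  exact this

theorem free_energy_lipschitz_cut_norm (n : ℕ) (J D : Matrix (Fin n) (Fin n) ℝ)
    (hJsymm : J.IsSymm) (hJdiag : ∀ i, J i i = 0)
    (hDsymm : D.IsSymm) (hDdiag : ∀ i, D i i = 0) :
    |Real.log (partitionFn J) - Real.log (partitionFn D)| ≤ normInftyOne (J - D) := by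
  have key : ∀ A B : Matrix (Fin n) (Fin n) ℝ,
      (∀ x, isingEnergy A x - isingEnergy B x ≤ normInftyOne (J - D)) →
      Real.log (partitionFn A) - Real.log (partitionFn B) ≤ normInftyOne (J - D) := by
    intro A B hAB
    have hBpos : 0 < partitionFn B :=
      Finset.sum_pos (fun x _ => Real.exp_pos _) ⟨fun _ => true, Finset.mem_univ _⟩
    have hApos : 0 < partitionFn A :=
      Finset.sum_pos (fun x _ => Real.exp_pos _) ⟨fun _ => true, Finset.mem_univ _⟩
    have hle : partitionFn A ≤ Real.exp (normInftyOne (J - D)) * partitionFn B := by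
      rw [partitionFn, partitionFn, Finset.mul_sum]
      refine Finset.sum_le_sum fun x _ => ?_
      rw [← Real.exp_add]
      exact Real.exp_le_exp.2 (by linarith [hAB x])
    have := Real.log_le_log hApos hle
    rw [Real.log_mul (Real.exp_pos _).ne' hBpos.ne', Real.log_exp,
      add_comm] at this
    linarith
  rw [abs_sub_le_iff]
  constructor
  · exact key J D fun x => (le_abs_self _).trans (energy_diff_le J D x)
  · refine key D J fun x => ?_
    have := energy_diff_le J D x
    rw [abs_sub_comm] at this
    exact (le_abs_self _).trans this
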